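/- For all integers N ≥ 2 and d ≥ 3 with (N, d) ≠ (3, 3), the rational number F_stab(d, N) is positive; moreover F_stab(3, 3) = 0. -/
import Mathlib


/-- The rational number `F_stab(d, N)` from the paper. -/
def Fstab (d N : ℕ) : ℚ :=
  if Odd N then
    ((N : ℚ) + 1) / (24 * (d : ℚ) ^ 2) *
      (((d : ℚ) - 1) ^ N * ((d : ℚ) ^ 2 * N - (d : ℚ) ^ 2 - 2 * d * N - 2) +
        2 * ((d : ℚ) ^ 2 - 1))
  else
    ((N : ℚ) + 1) / (24 * (d : ℚ) ^ 2) *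
      (((d : ℚ) - 1) ^ N * ((d : ℚ) ^ 2 * N + 2 * (d : ℚ) ^ 2 - 2 * d * N - 2) -
        2 * ((d : ℚ) ^ 2 - 1))

/-- For `N ≥ 2` and `d ≥ 3` with `(N, d) ≠ (3, 3)`, `F_stab(d, N) > 0`;
moreover `F_stab(3, 3) = 0`. -/
theorem Fstab_pos :
    (∀ N d : ℕ, 2 ≤ N → 3 ≤ d → (N, d) ≠ (3, 3) → 0 < Fstab d N) ∧ Fstab 3 3 = 0 := by
  constructor
  · intro N d hN hd hne
    have hx : (3:ℚ) ≤ (d:ℚ) := by exact_mod_cast hd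
    have hn : (2:ℚ) ≤ (N:ℚ) := by exact_mod_cast hN
    have hc : 0 < ((N:ℚ) + 1) / (24 * (d:ℚ) ^ 2) := by positivity
    have hx1 : (0:ℚ) < (d:ℚ) - 1 := by linarith
    unfold Fstab
    by_cases hOdd : Odd N
    · rw [if_pos hOdd]
      apply mul_pos hc
      by_cases hN3 : N = 3
      · subst hN3
        have hd4 : 4 ≤ d := by
          rcases Nat.lt_or_ge d 4 with h | h
          · exfalso; apply hne; have : d = 3 := by omega
            simp [this]
          · exact h
        have hx4 : (4:ℚ) ≤ (d:ℚ) := by exact_mod_cast hd4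
        push_cast
        nlinarith [sq_nonneg ((d:ℚ) - 4), sq_nonneg ((d:ℚ)), pow_pos hx1 3,
          mul_nonneg (mul_nonneg (sub_nonneg.2 hx4) (sub_nonneg.2 hx4)) (sub_nonneg.2 hx4),
          mul_nonneg (mul_nonneg (mul_nonneg (sub_nonneg.2 hx4) (sub_nonneg.2 hx4)) (sub_nonneg.2 hx4)) (sub_nonneg.2 hx4)]
      · have hN5 : 5 ≤ N := by
          obtain ⟨k, hk⟩ := hOdd; omega
        have hn5 : (5:ℚ) ≤ (N:ℚ) := by exact_mod_cast hN5
        have hA : 0 < (d:ℚ) ^ 2 * N - (d:ℚ) ^ 2 - 2 * d * N - 2 := by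
          nlinarith [mul_nonneg (sub_nonneg.2 hx) (sub_nonneg.2 hn5),
            mul_nonneg (mul_nonneg (sub_nonneg.2 hx) (sub_nonneg.2 hx)) (sub_nonneg.2 hn5)]
        have h2 : (0:ℚ) < 2 * ((d:ℚ) ^ 2 - 1) := by nlinarith
        exact add_pos (mul_pos (pow_pos hx1 N) hA) h2
    · rw [if_neg hOdd]
      apply mul_pos hc
      have h1 : (1:ℚ) ≤ (d:ℚ) - 1 := by linarith
      have hp : ((d:ℚ) - 1) ^ 2 ≤ ((d:ℚ) - 1) ^ N := pow_le_pow_right₀ h1 hN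
      have hA : 0 < (d:ℚ) ^ 2 * N + 2 * (d:ℚ) ^ 2 - 2 * d * N - 2 := by
        nlinarith [mul_nonneg (sub_nonneg.2 hx) (sub_nonneg.2 hn),
          mul_nonneg (mul_nonneg (sub_nonneg.2 hx) (sub_nonneg.2 hx)) (sub_nonneg.2 hn)]
      have hmul : ((d:ℚ) - 1) ^ 2 * ((d:ℚ) ^ 2 * N + 2 * (d:ℚ) ^ 2 - 2 * d * N - 2)
          ≤ ((d:ℚ) - 1) ^ N * ((d:ℚ) ^ 2 * N + 2 * (d:ℚ) ^ 2 - 2 * d * N - 2) :=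
        mul_le_mul_of_nonneg_right hp hA.le
      nlinarith [hmul, mul_nonneg (sub_nonneg.2 hx) (sub_nonneg.2 hn),
        mul_nonneg (mul_nonneg (sub_nonneg.2 hx) (sub_nonneg.2 hx)) (sub_nonneg.2 hn),
        mul_nonneg (mul_nonneg (mul_nonneg (sub_nonneg.2 hx) (sub_nonneg.2 hx)) (sub_nonneg.2 hx)) (sub_nonneg.2 hn),
        sq_nonneg ((d:ℚ) - 3), sq_nonneg ((d:ℚ) - 1)]
  · norm_num [Fstab, Nat.odd_iff]
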